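/- Let B be an invertible real 2×2 matrix, J := det B, a ∈ ℝ², and F(x) := Bx + a. Let v̂ : ℝ² → ℝ² be differentiable and let v : ℝ² → ℝ² be its re-scaled covariant Piola transform, v(F(x)) = J·B⁻ᵀ v̂(x). Then v is differentiable and its symmetric gradient transforms as ε(v)(F(x)) = J·B⁻ᵀ ε(v̂)(x) B⁻¹ for all x ∈ ℝ². -/

import Mathlib

open Matrix

noncomputable section

/-- Jacobian matrix of a vector field `w : ℝ² → ℝ²`. -/
def jac (w : (Fin 2 → ℝ) → Fin 2 → ℝ) (y : Fin 2 → ℝ) : Matrix (Fin 2) (Fin 2) ℝ :=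
  Matrix.of fun k j => fderiv ℝ (fun z => w z k) y (Pi.single j 1)

/-- Symmetric gradient (strain) `ε(w) = (Dw + Dwᵀ)/2` of a vector field. -/
def symGrad (w : (Fin 2 → ℝ) → Fin 2 → ℝ) (y : Fin 2 → ℝ) : Matrix (Fin 2) (Fin 2) ℝ :=
  (1 / 2 : ℝ) • (jac w y + (jac w y)ᵀ)

lemma jac_apply_eq {w : (Fin 2 → ℝ) → Fin 2 → ℝ} {y : Fin 2 → ℝ}
    (hw : DifferentiableAt ℝ w y) (k j : Fin 2) :
    jac w y k j = fderiv ℝ w y (Pi.single j 1) k := by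
  have h : HasFDerivAt (fun z => w z k)
      ((ContinuousLinearMap.proj k).comp (fderiv ℝ w y)) y :=
    (ContinuousLinearMap.proj (R := ℝ) (φ := fun _ : Fin 2 => ℝ) k).hasFDerivAt.comp y
      hw.hasFDerivAt
  simp [jac, h.fderiv]

/-- Transformation of the symmetric gradient under the re-scaled covariant Piola
transform `v(Bx + a) = det B · B⁻ᵀ v̂(x)`:
`ε(v)(Bx + a) = det B · B⁻ᵀ ε(v̂)(x) B⁻¹`. -/
theorem piola_strain_transform
    (B : Matrix (Fin 2) (Fin 2) ℝ) (hB : IsUnit B.det) (a : Fin 2 → ℝ)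
    (vhat v : (Fin 2 → ℝ) → Fin 2 → ℝ)
    (hdiff : Differentiable ℝ vhat)
    (hv : ∀ y, v (B.mulVec y + a) = B.det • (B⁻¹)ᵀ.mulVec (vhat y)) :
    Differentiable ℝ v ∧
    ∀ y, symGrad v (B.mulVec y + a) = B.det • ((B⁻¹)ᵀ * symGrad vhat y * B⁻¹) := by
  have hBB : B * B⁻¹ = 1 := Matrix.mul_nonsing_inv B hB
  have hBB' : B⁻¹ * B = 1 := Matrix.nonsing_inv_mul B hB
  -- continuous linear maps
  let L : (Fin 2 → ℝ) →L[ℝ] (Fin 2 → ℝ) :=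
    (Matrix.mulVecLin (B.det • (B⁻¹)ᵀ)).toContinuousLinearMap
  let C : (Fin 2 → ℝ) →L[ℝ] (Fin 2 → ℝ) :=
    (Matrix.mulVecLin (B⁻¹)).toContinuousLinearMap
  have hLapp : ∀ u, L u = B.det • (B⁻¹)ᵀ.mulVec u := by
    intro u
    change (B.det • (B⁻¹)ᵀ).mulVec u = _
    rw [Matrix.smul_mulVec]
  have hCapp : ∀ u, C u = (B⁻¹).mulVec u := fun u => rfl
  -- v as a composition
  have hvz : ∀ z, v z = L (vhat (C (z - a))) := by
    intro z
    have h1 : B.mulVec ((B⁻¹).mulVec (z - a)) + a = z := by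
      rw [Matrix.mulVec_mulVec, hBB, Matrix.one_mulVec, sub_add_cancel]
    have := hv ((B⁻¹).mulVec (z - a))
    rw [h1] at this
    rw [this, hLapp, hCapp]
  have hvfun : v = fun z => L (vhat (C (z - a))) := funext hvz
  -- derivative of v
  have hvd : ∀ z, HasFDerivAt v
      (L.comp ((fderiv ℝ vhat (C (z - a))).comp C)) z := by
    intro z
    have hG : HasFDerivAt (fun z => C (z - a)) C z := by
      have := C.hasFDerivAt.comp z ((hasFDerivAt_id z).sub_const a)
      simpa using this
    have h1 : HasFDerivAt (fun z => vhat (C (z - a)))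
        ((fderiv ℝ vhat (C (z - a))).comp C) z :=
      ((hdiff (C (z - a))).hasFDerivAt).comp z hG
    have h2 := L.hasFDerivAt.comp z h1
    rw [hvfun]
    exact h2
  have hvdiff : Differentiable ℝ v := fun z => (hvd z).differentiableAt
  refine ⟨hvdiff, fun x => ?_⟩
  -- the point
  set Fx := B.mulVec x + a with hFx
  have hCx : C (Fx - a) = x := by
    rw [hCapp, hFx, add_sub_cancel_right, Matrix.mulVec_mulVec, hBB', Matrix.one_mulVec]
  -- jacobian identity
  have hjac : jac v Fx = B.det • ((B⁻¹)ᵀ * jac vhat x * B⁻¹) := by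
    have hDv : fderiv ℝ v Fx = L.comp ((fderiv ℝ vhat x).comp C) := by
      have := (hvd Fx).fderiv
      rwa [hCx] at this
    ext k j
    rw [jac_apply_eq (hvdiff Fx) k j, hDv]
    have hsingle : C (Pi.single j 1) = ∑ i, (B⁻¹) i j • (Pi.single i 1 : Fin 2 → ℝ) := by
      rw [hCapp]
      ext i
      simp [Pi.single_apply, Finset.sum_ite_eq']
    have hD : ∀ i m, fderiv ℝ vhat x (Pi.single i 1) m = jac vhat x m i := by
      intro i m
      rw [jac_apply_eq (hdiff x) m i]
    simp only [ContinuousLinearMap.comp_apply, hsingle, map_sum, _root_.map_smul]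
    simp only [hLapp, Finset.sum_apply, Pi.smul_apply, Matrix.smul_apply,
      Matrix.mulVec, dotProduct, Matrix.mul_apply, Matrix.transpose_apply,
      smul_eq_mul, hD, Finset.mul_sum, Finset.sum_mul]
    refine Finset.sum_congr rfl fun i _ => ?_
    refine Finset.sum_congr rfl fun m _ => ?_
    ring
  -- conclude for symGrad
  have htr : (jac v Fx)ᵀ = B.det • ((B⁻¹)ᵀ * (jac vhat x)ᵀ * B⁻¹) := by
    rw [hjac]
    simp [Matrix.transpose_smul, Matrix.transpose_mul, Matrix.mul_assoc]
  rw [symGrad, symGrad, htr, hjac]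
  simp only [smul_add, Matrix.mul_add, Matrix.add_mul, Matrix.mul_smul,
    Matrix.smul_mul, smul_smul]
  module
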